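/- Let (u,p) ∈ K × Q solve the continuous Biot contact problem and let (u_N, p_M) ∈ K_N × W solve the discrete Biot contact problem. Then for all v ∈ K, all v_N ∈ K_N and all q_M ∈ W, ‖p − p_M‖_Q² ≤ 126‖u − v_N‖_H² + 39‖p − q_M‖_Q² + 12⟨Du − l, (v_N − u) + (v − u_N)⟩_H, where D = id_H + B†∘B and l = f_e − B† f_f. -/
import Mathlib


open scoped RealInnerProductSpace

set_option maxHeartbeats 1000000 in
/-- A priori error estimate for the pressure:
`‖p − p_M‖² ≤ 126‖u − v_N‖² + 39‖p − q_M‖² + 12⟨Du − l, (v_N − u) + (v − u_N)⟩`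
for all `v ∈ K`, `v_N ∈ K_N`, `q_M ∈ W`, with `D = id + B†∘B`, `l = f_e − B† f_f`. -/
theorem stmt_15 {H Q : Type*}
    [NormedAddCommGroup H] [InnerProductSpace ℝ H] [CompleteSpace H]
    [NormedAddCommGroup Q] [InnerProductSpace ℝ Q] [CompleteSpace Q]
    (B : H →L[ℝ] Q) (hB : ‖B‖ ≤ 1)
    (K : Set H) (hK_ne : K.Nonempty) (hK_cl : IsClosed K) (hK_cv : Convex ℝ K)
    (V_N : Submodule ℝ H) (hVN : FiniteDimensional ℝ V_N)
    (K_N : Set H) (hKN_sub : K_N ⊆ (V_N : Set H))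
    (hKN_ne : K_N.Nonempty) (hKN_cl : IsClosed K_N) (hKN_cv : Convex ℝ K_N)
    (W : Submodule ℝ Q) (hW : FiniteDimensional ℝ W)
    (f_e : H) (f_f : Q)
    (D : H →L[ℝ] H) (l : H)
    (hD : D = ContinuousLinearMap.id ℝ H + (ContinuousLinearMap.adjoint B).comp B)
    (hl : l = f_e - ContinuousLinearMap.adjoint B f_f)
    (u : H) (p : Q) (hu : u ∈ K)
    (hVI : ∀ v ∈ K, ⟪u, v - u⟫ - ⟪p, B (v - u)⟫ ≥ ⟪f_e, v - u⟫)
    (hEq : ∀ q : Q, -⟪B u, q⟫ - ⟪p, q⟫ = ⟪f_f, q⟫)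
    (u_N : H) (p_M : Q) (huN : u_N ∈ K_N) (hpM : p_M ∈ W)
    (hVIN : ∀ v_N ∈ K_N, ⟪u_N, v_N - u_N⟫ - ⟪p_M, B (v_N - u_N)⟫ ≥ ⟪f_e, v_N - u_N⟫)
    (hEqN : ∀ q ∈ W, -⟪B u_N, q⟫ - ⟪p_M, q⟫ = ⟪f_f, q⟫) :
    ∀ v ∈ K, ∀ v_N ∈ K_N, ∀ q_M ∈ W,
      ‖p - p_M‖ ^ 2 ≤ 126 * ‖u - v_N‖ ^ 2 + 39 * ‖p - q_M‖ ^ 2 +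
        12 * ⟪D u - l, (v_N - u) + (v - u_N)⟫ := by
  intro v hv v_N hvN q_M hqM
  -- Reformulation: ⟪Du - l, w⟫ = ⟪u,w⟫ - ⟪p,Bw⟫ - ⟪f_e,w⟫
  have key : ∀ w : H, ⟪D u - l, w⟫ = ⟪u, w⟫ - ⟪p, B w⟫ - ⟪f_e, w⟫ := by
    intro w
    have h1 := hEq (B w)
    simp only [hD, hl, ContinuousLinearMap.add_apply, ContinuousLinearMap.id_apply,
      ContinuousLinearMap.coe_comp', Function.comp_apply, inner_sub_left, inner_add_left,
      ContinuousLinearMap.adjoint_inner_left]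
    linarith
  -- continuous consistency
  have hcons : (0:ℝ) ≤ ⟪D u - l, v - u⟫ := by
    rw [key]
    have := hVI v hv
    linarith
  -- discrete estimate
  have hC : ⟪u - u_N, v_N - u_N⟫ ≤ ⟪D u - l, v_N - u_N⟫ + ⟪p - p_M, B (v_N - u_N)⟫ := by
    have h := hVIN v_N hvN
    rw [key]
    simp only [inner_sub_left]
    linarith
  -- Galerkin orthogonality on W
  have hA : ⟪p - p_M, q_M - p_M⟫ = -⟪B (u - u_N), q_M - p_M⟫ := by
    have hqW : q_M - p_M ∈ W := W.sub_mem hqM hpM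
    have h1 := hEq (q_M - p_M)
    have h2 := hEqN (q_M - p_M) hqW
    simp only [inner_sub_left, map_sub]
    linarith
  -- splittings
  have hsplit1 : ⟪u - u_N, u - u_N⟫ = ⟪u - u_N, u - v_N⟫ + ⟪u - u_N, v_N - u_N⟫ := by
    rw [← inner_add_right]
    congr 1
    abel
  have hsplit2 : ⟪p - p_M, B (v_N - u_N)⟫
      = ⟪p - p_M, B (v_N - u)⟫ + ⟪p - p_M, B (u - u_N)⟫ := by
    rw [← inner_add_right, ← map_add]
    congr 2
    abel
  have hsplit3 : ⟪D u - l, (v_N - u) + (v - u_N)⟫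
      = ⟪D u - l, v_N - u_N⟫ + ⟪D u - l, v - u⟫ := by
    rw [← inner_add_right]
    congr 1
    abel
  have hsplit4 : ⟪B (u - u_N), p - p_M⟫
      = ⟪B (u - u_N), p - q_M⟫ + ⟪B (u - u_N), q_M - p_M⟫ := by
    rw [← inner_add_right]
    congr 1
    abel
  have hsplit5 : ⟪p - p_M, q_M - p_M⟫ = ⟪p - p_M, p - p_M⟫ - ⟪p - p_M, p - q_M⟫ := by
    have h : q_M - p_M = (p - p_M) - (p - q_M) := by abel
    rw [h, inner_sub_right]
  have hcomm : ⟪p - p_M, B (u - u_N)⟫ = ⟪B (u - u_N), p - p_M⟫ := real_inner_comm _ _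
  have hn1 : ⟪u - u_N, u - u_N⟫ = ‖u - u_N‖ ^ 2 := real_inner_self_eq_norm_sq _
  have hn2 : ⟪p - p_M, p - p_M⟫ = ‖p - p_M‖ ^ 2 := real_inner_self_eq_norm_sq _
  -- norm bounds
  have hBvN : ‖B (v_N - u)‖ ≤ ‖u - v_N‖ := by
    have h1 := B.le_opNorm (v_N - u)
    have h2 : ‖v_N - u‖ = ‖u - v_N‖ := norm_sub_rev _ _
    nlinarith [norm_nonneg (v_N - u)]
  have hBe : ‖B (u - u_N)‖ ≤ ‖u - u_N‖ := by
    have h1 := B.le_opNorm (u - u_N)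
    nlinarith [norm_nonneg (u - u_N)]
  have hb1 : ⟪u - u_N, u - v_N⟫ ≤ ‖u - u_N‖ * ‖u - v_N‖ := real_inner_le_norm _ _
  have hb2 : ⟪p - p_M, B (v_N - u)⟫ ≤ ‖p - p_M‖ * ‖u - v_N‖ := by
    calc ⟪p - p_M, B (v_N - u)⟫ ≤ ‖p - p_M‖ * ‖B (v_N - u)‖ := real_inner_le_norm _ _
      _ ≤ ‖p - p_M‖ * ‖u - v_N‖ := by
          exact mul_le_mul_of_nonneg_left hBvN (norm_nonneg _)
  have hb3 : ⟪B (u - u_N), p - q_M⟫ ≤ ‖u - u_N‖ * ‖p - q_M‖ := by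
    calc ⟪B (u - u_N), p - q_M⟫ ≤ ‖B (u - u_N)‖ * ‖p - q_M‖ := real_inner_le_norm _ _
      _ ≤ ‖u - u_N‖ * ‖p - q_M‖ := by
          exact mul_le_mul_of_nonneg_right hBe (norm_nonneg _)
  have hb4 : ⟪p - p_M, p - q_M⟫ ≤ ‖p - p_M‖ * ‖p - q_M‖ := real_inner_le_norm _ _
  -- combined scalar inequality
  set a := ‖u - u_N‖ with ha
  set b := ‖p - p_M‖ with hb'
  set x := ‖u - v_N‖ with hx
  set y := ‖p - q_M‖ with hy
  set T := ⟪D u - l, (v_N - u) + (v - u_N)⟫ with hT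
  have hmain : a ^ 2 + b ^ 2 ≤ a * x + b * x + a * y + b * y + T := by
    linarith [hC, hcons, hA, hsplit1, hsplit2, hsplit3, hsplit4, hsplit5, hcomm,
      hn1, hn2, hb1, hb2, hb3, hb4]
  have hax : 0 ≤ a := norm_nonneg _
  have hbx : 0 ≤ b := norm_nonneg _
  have hxx : 0 ≤ x := norm_nonneg _
  have hyy : 0 ≤ y := norm_nonneg _
  nlinarith [hmain, sq_nonneg (a - x), sq_nonneg (a - y),
    sq_nonneg (11 * b - 12 * x), sq_nonneg (11 * b - 12 * y)]
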